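/- Let F be a finite field with q elements, q ≡ 3 (mod 4). For every λ ∈ F that is a nonzero square with λ ≠ 1, the number of admissible pairs (a, b) in F with b²/a² = λ is exactly q − 1. Consequently, the set of values b²/a² over all admissible pairs (a, b) is precisely the set of nonzero squares λ ≠ 1, which has (q − 3)/2 elements. -/

import Mathlib

/-- A pair `(a, b)` of elements of a field is admissible if `a ≠ 0`, `b ≠ 0`, `a ≠ b`,
`a ≠ -b`, and `a*b` is a square. -/
def IsAdmissible {F : Type*} [Field F] (a b : F) : Prop :=
  a ≠ 0 ∧ b ≠ 0 ∧ a ≠ b ∧ a ≠ -b ∧ IsSquare (a * b)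

/-- The type of admissible pairs in `F`. -/
def AdmPair (F : Type*) [Field F] : Type _ := {v : F × F // IsAdmissible v.1 v.2}

section Aux

variable {F : Type*} [Field F] [Fintype F] (hq : Fintype.card F % 4 = 3)
include hq

lemma char_ne_two_aux : ringChar F ≠ 2 := by
  intro h
  have := FiniteField.even_card_of_char_two h
  omega

lemma neg_one_not_square_aux : ¬ IsSquare (-1 : F) := by
  rw [FiniteField.isSquare_neg_one_iff]
  omega

/-- The key dichotomy: for `c ≠ 0`, exactly one of `c`, `-c` is a square. -/
lemma square_dichotomy_aux {c : F} (hc : c ≠ 0) : IsSquare c ↔ ¬ IsSquare (-c) := by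
  classical
  constructor
  · rintro ⟨r, hr⟩ ⟨s, hs⟩
    apply neg_one_not_square_aux hq
    refine ⟨s / r, ?_⟩
    have hr0 : r ≠ 0 := by rintro rfl; simp at hr; exact hc hr
    rw [div_mul_div_comm, eq_div_iff (mul_ne_zero hr0 hr0)]
    linear_combination hs + hr
  · intro h
    by_contra hcs
    have hχc : quadraticChar F c = -1 := quadraticChar_neg_one_iff_not_isSquare.mpr hcs
    have hχn : quadraticChar F (-1 : F) = -1 :=
      quadraticChar_neg_one_iff_not_isSquare.mpr (neg_one_not_square_aux hq)
    have h1 : quadraticChar F (-c) = 1 := by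
      rw [show (-c : F) = (-1) * c by ring, map_mul, hχn, hχc]; ring
    exact h ((quadraticChar_one_iff_isSquare (neg_ne_zero.mpr hc)).mp h1)

lemma exists_root_aux {l : F} (hsq : IsSquare l) (hl0 : l ≠ 0) (hl1 : l ≠ 1) :
    ∃ d : F, IsSquare d ∧ d * d = l ∧ d ≠ 0 ∧ d ≠ 1 ∧ d ≠ -1 := by
  classical
  obtain ⟨c, rfl⟩ := hsq
  have hc : c ≠ 0 := by rintro rfl; simp at hl0
  have key : ∃ d : F, IsSquare d ∧ d * d = c * c := by
    by_cases h : IsSquare c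
    · exact ⟨c, h, rfl⟩
    · refine ⟨-c, ?_, by ring⟩
      by_contra h'
      exact h (((square_dichotomy_aux hq) hc).mpr h')
  obtain ⟨d, hd, hdd⟩ := key
  refine ⟨d, hd, hdd, ?_, ?_, ?_⟩
  · rintro rfl; rw [← hdd] at hl0; simp at hl0
  · rintro rfl; rw [← hdd] at hl1; simp at hl1
  · rintro rfl; rw [← hdd] at hl1; simp at hl1

omit hq in
omit [Fintype F] in
lemma isSquare_mul_sq_iff {x a : F} (ha : a ≠ 0) : IsSquare (x * (a * a)) ↔ IsSquare x := by
  constructor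
  · rintro ⟨r, hr⟩
    refine ⟨r / a, ?_⟩
    rw [div_mul_div_comm, eq_div_iff (mul_ne_zero ha ha)]
    linear_combination hr
  · rintro ⟨r, hr⟩
    exact ⟨r * a, by rw [hr]; ring⟩

/-- Any admissible pair with ratio `l = d*d`, `d` a square, has `b = d * a`. -/
lemma b_eq_aux {d : F} (hd : IsSquare d) (hd0 : d ≠ 0) (v : AdmPair F)
    (hv : v.1.2 ^ 2 / v.1.1 ^ 2 = d * d) : v.1.2 = d * v.1.1 := by
  obtain ⟨⟨a, b⟩, ha, hb, hab, hab', habsq⟩ := v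
  simp only at *
  have hb2 : b ^ 2 = (d * a) ^ 2 := by
    field_simp at hv
    rw [hv]; ring
  have : (b - d * a) * (b + d * a) = 0 := by ring_nf; linear_combination hb2
  rcases mul_eq_zero.mp this with h | h
  · exact sub_eq_zero.mp h
  · exfalso
    have hbeq : b = -(d * a) := eq_neg_of_add_eq_zero_left h
    rw [hbeq] at habsq
    have : IsSquare (-d * (a * a)) := by
      convert habsq using 1; ring
    rw [isSquare_mul_sq_iff ha] at this
    exact ((square_dichotomy_aux hq hd0).mp hd) this

end Aux

/-- For a finite field `F` with `q ≡ 3 (mod 4)` elements: every nonzero square `λ ≠ 1` arises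
as `b²/a²` for exactly `q - 1` admissible pairs `(a, b)`; the set of values `b²/a²` over all
admissible pairs is precisely the set of nonzero squares `≠ 1`; and this set has `(q - 3)/2`
elements. -/
theorem card_admissible_pairs_with_lambda
    (F : Type*) [Field F] [Fintype F] (hq : Fintype.card F % 4 = 3) :
    (∀ l : F, IsSquare l → l ≠ 0 → l ≠ 1 →
      Nat.card {v : AdmPair F // v.1.2 ^ 2 / v.1.1 ^ 2 = l} = Fintype.card F - 1) ∧
    {x : F | ∃ v : AdmPair F, v.1.2 ^ 2 / v.1.1 ^ 2 = x} =
      {l : F | IsSquare l ∧ l ≠ 0 ∧ l ≠ 1} ∧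
    Set.ncard {l : F | IsSquare l ∧ l ≠ 0 ∧ l ≠ 1} = (Fintype.card F - 3) / 2 := by
  classical
  have hchar : ringChar F ≠ 2 := char_ne_two_aux hq
  -- the admissibility of the standard pair (a, d*a)
  have mk_adm : ∀ {d : F}, IsSquare d → d ≠ 0 → d ≠ 1 → d ≠ -1 → ∀ {a : F}, a ≠ 0 →
      IsAdmissible a (d * a) := by
    intro d hd hd0 hd1 hdn1 a ha
    refine ⟨ha, mul_ne_zero hd0 ha, ?_, ?_, ?_⟩
    · intro h
      apply hd1
      have : (d - 1) * a = 0 := by linear_combination -h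
      rcases mul_eq_zero.mp this with h' | h'
      · exact sub_eq_zero.mp h'
      · exact absurd h' ha
    · intro h
      apply hdn1
      have : (d + 1) * a = 0 := by linear_combination h
      rcases mul_eq_zero.mp this with h' | h'
      · exact eq_neg_of_add_eq_zero_left h'
      · exact absurd h' ha
    · have : a * (d * a) = d * (a * a) := by ring
      rw [this, isSquare_mul_sq_iff ha]
      exact hd
  refine ⟨?_, ?_, ?_⟩
  · -- counting part
    intro l hsq hl0 hl1
    obtain ⟨d, hd, hdd, hd0, hd1, hdn1⟩ := exists_root_aux hq hsq hl0 hl1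
    have e : {v : AdmPair F // v.1.2 ^ 2 / v.1.1 ^ 2 = l} ≃ {a : F // a ≠ 0} :=
      { toFun := fun v => ⟨v.1.1.1, v.1.2.1⟩
        invFun := fun a =>
          ⟨⟨(a.1, d * a.1), mk_adm hd hd0 hd1 hdn1 a.2⟩, by
            simp only
            have ha := a.2
            rw [← hdd]
            field_simp⟩
        left_inv := by
          rintro ⟨v, hv⟩
          have hb : v.1.2 = d * v.1.1 := b_eq_aux hq hd hd0 v (by rw [hv, hdd])
          apply Subtype.ext
          apply Subtype.ext
          exact Prod.ext rfl hb.symm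
        right_inv := fun a => rfl }
    rw [Nat.card_congr e, Nat.card_congr unitsEquivNeZero.symm, Nat.card_eq_fintype_card,
      Fintype.card_units]
  · -- set equality
    ext x
    simp only [Set.mem_setOf_eq]
    constructor
    · rintro ⟨⟨⟨a, b⟩, ha, hb, hab, hab', habsq⟩, hx⟩
      simp only at *
      subst hx
      refine ⟨?_, ?_, ?_⟩
      · exact ⟨b / a, by field_simp⟩
      · exact div_ne_zero (pow_ne_zero _ hb) (pow_ne_zero _ ha)
      · intro h
        have hb2 : b ^ 2 = a ^ 2 := by
          field_simp at h
          exact h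
        have : (b - a) * (b + a) = 0 := by linear_combination hb2
        rcases mul_eq_zero.mp this with h' | h'
        · exact hab (sub_eq_zero.mp h').symm
        · exact hab' (eq_neg_of_add_eq_zero_right h')
    · rintro ⟨hsq, hl0, hl1⟩
      obtain ⟨d, hd, hdd, hd0, hd1, hdn1⟩ := exists_root_aux hq hsq hl0 hl1
      refine ⟨⟨(1, d * 1), mk_adm hd hd0 hd1 hdn1 one_ne_zero⟩, ?_⟩
      simp only
      rw [← hdd]
      field_simp
  · -- cardinality of the set of nonzero squares ≠ 1
    have h2 : (2 : F) ≠ 0 := Ring.two_ne_zero hchar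
    set T : Finset F := Finset.univ.filter (fun l => IsSquare l ∧ l ≠ 0) with hT
    set N : Finset F := Finset.univ.filter (fun x : F => x ≠ 0) with hN
    have hNcard : N.card = Fintype.card F - 1 := by
      rw [hN, Finset.filter_ne']
      simp [Finset.card_erase_of_mem]
    have hmaps : ∀ x ∈ N, x * x ∈ T := by
      intro x hx
      simp only [hN, Finset.mem_filter, Finset.mem_univ, true_and] at hx
      simp only [hT, Finset.mem_filter, Finset.mem_univ, true_and]
      exact ⟨⟨x, rfl⟩, mul_ne_zero hx hx⟩
    have hfib : N.card = ∑ b ∈ T, (N.filter (fun x => x * x = b)).card :=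
      Finset.card_eq_sum_card_fiberwise hmaps
    have hfib2 : ∀ b ∈ T, (N.filter (fun x => x * x = b)).card = 2 := by
      intro b hb
      simp only [hT, Finset.mem_filter, Finset.mem_univ, true_and] at hb
      obtain ⟨⟨y, hy⟩, hb0⟩ := hb
      have hy0 : y ≠ 0 := by rintro rfl; simp at hy; exact hb0 hy
      have : N.filter (fun x => x * x = b) = {y, -y} := by
        ext x
        simp only [hN, Finset.mem_filter, Finset.mem_univ, true_and, Finset.mem_insert,
          Finset.mem_singleton]
        constructor
        · rintro ⟨hx0, hxx⟩
          have : (x - y) * (x + y) = 0 := by rw [hy] at hxx; linear_combination hxx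
          rcases mul_eq_zero.mp this with h | h
          · left; exact sub_eq_zero.mp h
          · right; exact eq_neg_of_add_eq_zero_left h
        · rintro (rfl | rfl)
          · exact ⟨hy0, hy.symm⟩
          · exact ⟨neg_ne_zero.mpr hy0, by rw [hy]; ring⟩
      rw [this, Finset.card_insert_of_notMem, Finset.card_singleton]
      simp only [Finset.mem_singleton]
      intro h
      apply hy0
      have : (2 : F) * y = 0 := by linear_combination h
      rcases mul_eq_zero.mp this with h' | h'
      · exact absurd h' h2
      · exact h'
    have hsum : N.card = 2 * T.card := by
      rw [hfib, Finset.sum_congr rfl hfib2, Finset.sum_const, smul_eq_mul, mul_comm]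
    have h1T : (1 : F) ∈ T := by
      simp only [hT, Finset.mem_filter, Finset.mem_univ, true_and]
      exact ⟨IsSquare.one, one_ne_zero⟩
    have hset : {l : F | IsSquare l ∧ l ≠ 0 ∧ l ≠ 1} = ↑(T.erase 1) := by
      ext l
      simp only [Set.mem_setOf_eq, Finset.coe_erase, Set.mem_diff, Finset.mem_coe, hT,
        Finset.mem_filter, Finset.mem_univ, true_and, Set.mem_singleton_iff]
      tauto
    rw [hset, Set.ncard_coe_finset, Finset.card_erase_of_mem h1T]
    have hq2 : Fintype.card F % 2 = 1 := FiniteField.odd_card_of_char_ne_two hchar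
    have hqge : 3 ≤ Fintype.card F := by
      have := Fintype.card_pos (α := F)
      omega
    omega
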